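/- Let X be a real Hilbert space, let A, B : X ⇉ X be monotone set-valued operators with total resolvent selections J_A, J_B, and let T be the Douglas–Rachford operator of (A,B). Then {z − J_A z : z ∈ X, 0 ∈ B z} ⊆ {y − T y : y ∈ X} ⊆ {b − a : b, a ∈ X, B b ≠ ∅, A a ≠ ∅}; that is, (Id − J_A)(B⁻¹ 0) is contained in the range of Id − T, which in turn is contained in dom B − dom A. -/

import Mathlib

open scoped RealInnerProductSpace

/-- `(Id - J_A)(B⁻¹ 0) ⊆ ran (Id - T) ⊆ dom B - dom A` for the
Douglas–Rachford operator `T` of monotone `(A,B)`. -/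
theorem stmt13 {X : Type*} [NormedAddCommGroup X] [InnerProductSpace ℝ X] [CompleteSpace X]
    (A B : X → Set X)
    (hA : ∀ x y x' y' : X, x' ∈ A x → y' ∈ A y → 0 ≤ ⟪x - y, x' - y'⟫)
    (hB : ∀ x y x' y' : X, x' ∈ B x → y' ∈ B y → 0 ≤ ⟪x - y, x' - y'⟫)
    (JA JB : X → X)
    (hJA : ∀ x : X, x - JA x ∈ A (JA x)) (hJB : ∀ x : X, x - JB x ∈ B (JB x))
    (T : X → X) (hT : ∀ x : X, T x = JA (2 • JB x - x) + x - JB x) :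
    ({y : X | ∃ z : X, 0 ∈ B z ∧ y = z - JA z} ⊆ {y : X | ∃ x : X, y = x - T x}) ∧
    ({y : X | ∃ x : X, y = x - T x}
      ⊆ {d : X | ∃ b a : X, B b ≠ ∅ ∧ A a ≠ ∅ ∧ d = b - a}) := by
  constructor
  · rintro y ⟨z, hz, rfl⟩
    -- monotonicity of B forces JB z = z
    have h := hB z (JB z) 0 (z - JB z) hz (hJB z)
    have h2 : ⟪z - JB z, z - JB z⟫ ≤ 0 := by
      have : ⟪z - JB z, 0 - (z - JB z)⟫ = -⟪z - JB z, z - JB z⟫ := by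
        rw [zero_sub, inner_neg_right]
      linarith [h, this ▸ h]
    have hzz : z - JB z = 0 := by
      have := real_inner_self_nonpos (x := z - JB z)
      exact this.mp h2
    have hJBz : JB z = z := by
      have := sub_eq_zero.mp hzz; exact this.symm
    refine ⟨z, ?_⟩
    rw [hT z, hJBz]
    have : (2 : ℕ) • z - z = z := by
      rw [two_smul]; abel
    rw [this]
    abel
  · rintro y ⟨x, rfl⟩
    refine ⟨JB x, JA (2 • JB x - x), ?_, ?_, ?_⟩
    · exact Set.nonempty_iff_ne_empty.mp ⟨_, hJB x⟩
    · exact Set.nonempty_iff_ne_empty.mp ⟨_, hJA _⟩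
    · rw [hT x]; abel
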